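/- Let G be a finite simple graph on N ≥ 2 vertices whose complement Gᶜ has exactly q connected components. Then the multiplicity of N as an eigenvalue of the Laplacian matrix L(G) (equivalently, the dimension of the kernel of L(G) − N·I) is exactly q − 1. -/

import Mathlib

open Matrix Polynomial

/-- The real Laplacian matrix of a simple graph on `Fin N`. -/
noncomputable def lapR {N : ℕ} (G : SimpleGraph (Fin N)) : Matrix (Fin N) (Fin N) ℝ :=
  letI := Classical.decRel G.Adj
  G.lapMatrix ℝ

/-- The Laplacian eigenvalues of a simple graph on `Fin N`, listed in nondecreasing order
with multiplicity; `sortedLapEigs G i` is the `(i+1)`-st smallest Laplacian eigenvalue. -/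
noncomputable def sortedLapEigs {N : ℕ} (G : SimpleGraph (Fin N)) : Fin N → ℝ :=
  letI := Classical.decRel G.Adj
  let f : Fin N → ℝ := (SimpleGraph.posSemidef_lapMatrix ℝ G).isHermitian.eigenvalues
  f ∘ Tuple.sort f

/-- sum functional -/
noncomputable def sumFun (N : ℕ) : (Fin N → ℝ) →ₗ[ℝ] ℝ where
  toFun x := ∑ i, x i
  map_add' x y := by simp [Finset.sum_add_distrib]
  map_smul' c x := by simp [Finset.mul_sum]

lemma lap_add_compl {N : ℕ} (G : SimpleGraph (Fin N)) (x : Fin N → ℝ) (i : Fin N) :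
    (lapR G *ᵥ x) i + (lapR Gᶜ *ᵥ x) i = N * x i - ∑ j, x j := by
  letI := Classical.decRel G.Adj
  letI := Classical.decRel Gᶜ.Adj
  show (SimpleGraph.lapMatrix ℝ G *ᵥ x) i + (SimpleGraph.lapMatrix ℝ Gᶜ *ᵥ x) i = _
  rw [SimpleGraph.lapMatrix_mulVec_apply, SimpleGraph.lapMatrix_mulVec_apply]
  have hdeg : (G.degree i : ℝ) + (Gᶜ.degree i : ℝ) = N - 1 := by
    rw [SimpleGraph.degree_eq_sum_if_adj, SimpleGraph.degree_eq_sum_if_adj,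
      ← Finset.sum_add_distrib]
    have h1 : ∀ j ∈ Finset.univ, ((if G.Adj i j then (1:ℝ) else 0) + (if Gᶜ.Adj i j then 1 else 0))
        = 1 - (if j = i then 1 else 0) := by
      intro j _
      by_cases h : j = i
      · subst h; simp
      · by_cases h2 : G.Adj i j
        · simp [h2, SimpleGraph.compl_adj, h]
        · simp [h2, SimpleGraph.compl_adj, Ne.symm h, h]
    rw [Finset.sum_congr rfl h1, Finset.sum_sub_distrib, Finset.sum_ite_eq' Finset.univ i]
    simp
  have hnb : (∑ u ∈ G.neighborFinset i, x u) + (∑ u ∈ Gᶜ.neighborFinset i, x u)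
      = (∑ j, x j) - x i := by
    rw [SimpleGraph.neighborFinset_eq_filter, SimpleGraph.neighborFinset_eq_filter,
      Finset.sum_filter, Finset.sum_filter, ← Finset.sum_add_distrib]
    have h1 : ∀ j ∈ Finset.univ, ((if G.Adj i j then x j else 0) + (if Gᶜ.Adj i j then x j else 0))
        = x j - (if j = i then x j else 0) := by
      intro j _
      by_cases h : j = i
      · subst h; simp
      · by_cases h2 : G.Adj i j
        · simp [h2, SimpleGraph.compl_adj, h]
        · simp [h2, SimpleGraph.compl_adj, Ne.symm h, h]
    rw [Finset.sum_congr rfl h1, Finset.sum_sub_distrib, Finset.sum_ite_eq' Finset.univ i]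
    simp
  linear_combination x i * hdeg - hnb

lemma ones_mem_ker {N : ℕ} (G : SimpleGraph (Fin N)) :
    lapR G *ᵥ (fun _ => (1:ℝ)) = 0 := by
  letI := Classical.decRel G.Adj
  exact SimpleGraph.lapMatrix_mulVec_const_eq_zero G

lemma sum_mulVec_lap {N : ℕ} (G : SimpleGraph (Fin N)) (x : Fin N → ℝ) :
    ∑ i, (lapR G *ᵥ x) i = 0 := by
  letI := Classical.decRel G.Adj
  have hsymm : (lapR G)ᵀ = lapR G := SimpleGraph.isSymm_lapMatrix ℝ G
  calc ∑ i, (lapR G *ᵥ x) i = (fun _ => (1:ℝ)) ⬝ᵥ (lapR G *ᵥ x) := by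
        simp [dotProduct]
    _ = ((fun _ => (1:ℝ)) ᵥ* lapR G) ⬝ᵥ x := dotProduct_mulVec _ _ _
    _ = ((lapR G)ᵀ *ᵥ fun _ => (1:ℝ)) ⬝ᵥ x := by rw [mulVec_transpose]
    _ = (0 : Fin N → ℝ) ⬝ᵥ x := by rw [hsymm, ones_mem_ker]
    _ = 0 := zero_dotProduct x

lemma eig_iff {N : ℕ} (hN : 2 ≤ N) (G : SimpleGraph (Fin N)) (x : Fin N → ℝ) :
    lapR G *ᵥ x = (N:ℝ) • x ↔ (lapR Gᶜ *ᵥ x = 0 ∧ ∑ i, x i = 0) := by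
  constructor
  · intro h
    have hc : ∀ i, (lapR Gᶜ *ᵥ x) i = -∑ j, x j := by
      intro i
      have := lap_add_compl G x i
      have hx : (lapR G *ᵥ x) i = N * x i := by rw [h]; simp
      linarith
    have hsum : ∑ i, x i = 0 := by
      have h0 := sum_mulVec_lap Gᶜ x
      rw [Finset.sum_congr rfl (fun i _ => hc i), Finset.sum_const, Finset.card_univ,
        Fintype.card_fin] at h0
      have hN0 : (N:ℝ) ≠ 0 := Nat.cast_ne_zero.mpr (by omega)
      simpa [nsmul_eq_mul, mul_eq_zero, hN0, neg_eq_zero] using h0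
    refine ⟨?_, hsum⟩
    ext i
    simp [hc i, hsum]
  · rintro ⟨h0, hs⟩
    ext i
    have := lap_add_compl G x i
    rw [h0] at this
    simp only [Pi.zero_apply, add_zero, hs, sub_zero] at this
    simp [this]

/-- If the complement of `G` has exactly `q` connected components, then the
multiplicity of `N` as a Laplacian eigenvalue of `G` (the dimension of the eigenspace,
i.e. of the kernel of `L(G) - N·I`) is exactly `q - 1`. -/
theorem multiplicity_card_eigenvalue_eq_components_sub_one {N : ℕ} (hN : 2 ≤ N)
    (G : SimpleGraph (Fin N)) (q : ℕ) (hq : Nat.card Gᶜ.ConnectedComponent = q) :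
    Module.finrank ℝ
      (Module.End.eigenspace (Matrix.toLin' (lapR G)) (N : ℝ)) = q - 1 := by
  classical
  letI := Classical.decRel Gᶜ.Adj
  set K : Submodule ℝ (Fin N → ℝ) := LinearMap.ker (Matrix.toLin' (lapR Gᶜ)) with hK
  have hKq : Module.finrank ℝ K = q := by
    rw [← hq, Nat.card_eq_fintype_card]
    exact (SimpleGraph.card_connectedComponent_eq_finrank_ker_toLin'_lapMatrix Gᶜ).symm
  -- eigenspace = K ⊓ ker sumFun
  have hEq : Module.End.eigenspace (Matrix.toLin' (lapR G)) (N : ℝ)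
      = K ⊓ LinearMap.ker (sumFun N) := by
    ext x
    rw [Module.End.mem_eigenspace_iff]
    simp only [Submodule.mem_inf, LinearMap.mem_ker, hK, Matrix.toLin'_apply]
    exact eig_iff hN G x
  rw [hEq]
  -- restrict sumFun to K
  have h1K : (fun _ => (1:ℝ)) ∈ K := by
    rw [hK, LinearMap.mem_ker, Matrix.toLin'_apply]
    exact ones_mem_ker Gᶜ
  set g : K →ₗ[ℝ] ℝ := (sumFun N).domRestrict K with hg
  have hrange : LinearMap.range g = ⊤ := by
    rw [LinearMap.range_eq_top]
    intro r
    refine ⟨⟨(r / N) • (fun _ => (1:ℝ)), K.smul_mem _ h1K⟩, ?_⟩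
    have hN0 : (N:ℝ) ≠ 0 := by positivity
    simp [hg, sumFun, Finset.mul_sum]
    field_simp
  have hrn := LinearMap.finrank_range_add_finrank_ker g
  rw [hrange, finrank_top, Module.finrank_self, hKq] at hrn
  have hker : Module.finrank ℝ (LinearMap.ker g) =
      Module.finrank ℝ (K ⊓ LinearMap.ker (sumFun N) : Submodule ℝ (Fin N → ℝ)) := by
    rw [hg, LinearMap.ker_domRestrict]
    rw [← Submodule.map_comap_subtype]
    exact (Submodule.equivMapOfInjective K.subtype K.injective_subtype _).finrank_eq
  rw [← hker]
  have : Module.finrank ℝ (Fin N → ℝ) = N := by simp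
  omega
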